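/- For every integer γ ≥ 1 there exists a connected bridgeless graph G with domination number γ(G) = γ whose oriented strong diameter equals 7γ − 1; hence the bound 7γ − 1 on the oriented strong diameter in terms of the domination number is sharp. -/

import Mathlib

open SimpleGraph

variable {V : Type*}

/-- A graph is bridgeless if no edge is a bridge. -/
def IsBridgeless (G : SimpleGraph V) : Prop := ∀ e : Sym2 V, ¬ G.IsBridge e

/-- `R` is an orientation of `G`: every arc of `R` is an edge of `G`, every edge of `G`
receives exactly one direction. -/
def IsOrientation (G : SimpleGraph V) (R : V → V → Prop) : Prop :=
  (∀ u v, R u v → G.Adj u v) ∧ (∀ u v, G.Adj u v → (R u v ∨ R v u)) ∧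
  (∀ u v, R u v → ¬ R v u)

/-- There is a directed walk of length `n` from `u` to `v` along the relation `R`. -/
def HasDirWalk (R : V → V → Prop) (u v : V) (n : ℕ) : Prop :=
  ∃ f : Fin (n + 1) → V, f 0 = u ∧ f (Fin.last n) = v ∧
    ∀ i : Fin n, R (f i.castSucc) (f i.succ)

/-- `R` is strongly connected. -/
def IsStrong (R : V → V → Prop) : Prop := ∀ u v : V, ∃ n, HasDirWalk R u v n

/-- `R` is strongly connected within the vertex set `W`. -/
def IsStrongOn (R : V → V → Prop) (W : Set V) : Prop :=
  ∀ u ∈ W, ∀ v ∈ W, ∃ n, HasDirWalk R u v n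

/-- Directed distance `∂(u,v)`: length of a shortest directed path from `u` to `v`. -/
noncomputable def ddist (R : V → V → Prop) (u v : V) : ℕ := sInf {n | HasDirWalk R u v n}

/-- `θ(u,v) = max{∂(u,v), ∂(v,u)}`. -/
noncomputable def theta (R : V → V → Prop) (u v : V) : ℕ := max (ddist R u v) (ddist R v u)

/-- The diameter of a (strong) orientation. -/
noncomputable def diamOr [Fintype V] (R : V → V → Prop) : ℕ :=
  Finset.univ.sup fun p : V × V => theta R p.1 p.2

/-- The oriented diameter of `G`. -/
noncomputable def orientedDiam [Fintype V] (G : SimpleGraph V) : ℕ :=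
  sInf {d | ∃ R : V → V → Prop, IsOrientation G R ∧ IsStrong R ∧ diamOr R = d}

/-- `A` is the arc set of a strongly connected subdigraph of `R` containing `u` and `v`. -/
def IsStrongSubOn (R : V → V → Prop) (u v : V) (A : Set (V × V)) : Prop :=
  (∀ p ∈ A, R p.1 p.2) ∧
  (∀ x ∈ insert u (insert v (Prod.fst '' A ∪ Prod.snd '' A)),
   ∀ y ∈ insert u (insert v (Prod.fst '' A ∪ Prod.snd '' A)),
     Relation.ReflTransGen (fun a b => (a, b) ∈ A) x y)

/-- Strong distance `sd(u,v)`: minimum number of arcs of a strong subdigraph containing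
`u` and `v`. -/
noncomputable def sdist (R : V → V → Prop) (u v : V) : ℕ :=
  sInf {n | ∃ A : Set (V × V), A.Finite ∧ A.ncard = n ∧ IsStrongSubOn R u v A}

/-- The strong diameter of a (strong) orientation. -/
noncomputable def sdiamOr [Fintype V] (R : V → V → Prop) : ℕ :=
  Finset.univ.sup fun p : V × V => sdist R p.1 p.2

/-- The oriented strong diameter of `G`. -/
noncomputable def orientedSDiam [Fintype V] (G : SimpleGraph V) : ℕ :=
  sInf {d | ∃ R : V → V → Prop, IsOrientation G R ∧ IsStrong R ∧ sdiamOr R = d}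

/-- `D` is a dominating set of `G`. -/
def IsDominating (G : SimpleGraph V) (D : Set V) : Prop :=
  ∀ v ∉ D, ∃ u ∈ D, G.Adj u v

/-- The domination number of `G`. -/
noncomputable def dominationNumber [Fintype V] (G : SimpleGraph V) : ℕ :=
  sInf {n | ∃ D : Set V, D.ncard = n ∧ IsDominating G D}

/-- `v` is associated with an isolated triangle. -/
def HasIsolatedTriangle (G : SimpleGraph V) (v : V) : Prop :=
  ∃ v₁ v₂ : V, G.Adj v v₁ ∧ G.Adj v₁ v₂ ∧ G.Adj v₂ v ∧
    (G.neighborSet v₁).ncard = 2 ∧ (G.neighborSet v₂).ncard = 2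

/-- `(G, D)` is a standard pair. -/
def IsStandardPair (G : SimpleGraph V) (D : Set V) : Prop :=
  IsBridgeless G ∧
  (∀ u ∈ D, ∀ v ∈ D, ¬ G.Adj u v) ∧
  (∀ v ∉ D, ∃! u, u ∈ D ∧ G.Adj u v) ∧
  (∀ v ∈ D, HasIsolatedTriangle G v)

/-- `H` is an alternative subgraph of `G` with respect to the dominating set `D`. -/
def IsAlternative (G : SimpleGraph V) (D : Set V) (H : G.Subgraph) : Prop :=
  IsBridgeless H.coe ∧
  (H.verts ∩ D).Nonempty ∧
  (∀ x ∈ H.verts ∩ D, ∃ a b : V, a ≠ b ∧ a ∉ D ∧ b ∉ D ∧ H.Adj x a ∧ H.Adj x b ∧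
    ∀ c, c ∉ D → H.Adj x c → c = a ∨ c = b) ∧
  (∀ y ∈ H.verts, y ∉ D → ∃ x ∈ H.verts ∩ D, H.Adj x y)

/-- `d_i(H⃗)`: maximum of `θ(u,v)` over pairs `u, v ∈ W` with `|{u,v} ∩ D| = i`. -/
noncomputable def dPairs (R : V → V → Prop) (W D : Set V) (i : ℕ) : ℕ :=
  sSup {k | ∃ u ∈ W, ∃ v ∈ W, ({u, v} ∩ D).ncard = i ∧ theta R u v = k}

/-- `m(H⃗) = max{d₀ − 2, d₁ − 1, d₂}`. -/
noncomputable def mOf (R : V → V → Prop) (W D : Set V) : ℕ :=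
  max (dPairs R W D 0 - 2) (max (dPairs R W D 1 - 1) (dPairs R W D 2))

/-- The graph obtained from `G` by subdividing the edge `uv` with a new vertex `none`. -/
def subdivide (G : SimpleGraph V) (u v : V) : SimpleGraph (Option V) :=
  SimpleGraph.fromRel fun a b =>
    match a, b with
    | some x, some y => G.Adj x y ∧ ¬(x = u ∧ y = v) ∧ ¬(x = v ∧ y = u)
    | some x, none => x = u ∨ x = v
    | none, _ => False

/-- The graph obtained from `G` by attaching a pendant triangle at `v`. -/
def pendantTriangle (G : SimpleGraph V) (v : V) : SimpleGraph (V ⊕ Fin 2) :=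
  SimpleGraph.fromRel fun a b =>
    match a, b with
    | Sum.inl x, Sum.inl y => G.Adj x y
    | Sum.inl x, Sum.inr _ => x = v
    | Sum.inr _, Sum.inl _ => False
    | Sum.inr i, Sum.inr j => i ≠ j

/-- `G` has a Hamiltonian path with endpoints `u` and `v`. -/
def HasHamiltonianPathBetween (G : SimpleGraph V) (u v : V) : Prop :=
  ∃ p : G.Walk u v, p.IsPath ∧ ∀ w : V, w ∈ p.support

namespace OSDS

/-! ### Generic lemmas about directed walks -/

lemma hasDirWalk_zero (R : V → V → Prop) (u : V) : HasDirWalk R u u 0 :=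
  ⟨fun _ => u, rfl, rfl, fun i => i.elim0⟩

lemma hasDirWalk_snoc {R : V → V → Prop} {u b c : V} {n : ℕ}
    (h : HasDirWalk R u b n) (hbc : R b c) : HasDirWalk R u c (n + 1) := by
  obtain ⟨f, h0, hl, hs⟩ := h
  refine ⟨Fin.snoc f c, ?_, ?_, ?_⟩
  · rw [show (0 : Fin (n + 2)) = Fin.castSucc 0 from rfl, Fin.snoc_castSucc]; exact h0
  · simp
  · intro i
    refine Fin.lastCases ?_ ?_ i
    · rw [Fin.succ_last, Fin.snoc_castSucc, Fin.snoc_last, hl]; exact hbc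
    · intro j
      rw [Fin.succ_castSucc, Fin.snoc_castSucc, Fin.snoc_castSucc]
      exact hs j

lemma reflTransGen_iff_dirWalk {R : V → V → Prop} {u v : V} :
    Relation.ReflTransGen R u v ↔ ∃ n, HasDirWalk R u v n := by
  constructor
  · intro h
    induction h with
    | refl => exact ⟨0, hasDirWalk_zero R u⟩
    | tail _ hbc ih => obtain ⟨n, hw⟩ := ih; exact ⟨n + 1, hasDirWalk_snoc hw hbc⟩
  · rintro ⟨n, hw⟩
    induction n generalizing u with
    | zero =>
      obtain ⟨f, h0, hl, _⟩ := hw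
      have : u = v := by rw [← h0, ← hl]; rfl
      exact this ▸ Relation.ReflTransGen.refl
    | succ n ih =>
      obtain ⟨f, h0, hl, hs⟩ := hw
      have hstep : R u (f 1) := by
        have := hs 0
        rwa [show (Fin.castSucc 0) = (0 : Fin (n+2)) from rfl, h0,
          show ((0 : Fin (n+1)).succ) = (1 : Fin (n+2)) from rfl] at this
      refine Relation.ReflTransGen.head hstep (ih ?_)
      refine ⟨fun i => f i.succ, rfl, ?_, ?_⟩
      · show f (Fin.last n).succ = v
        rw [Fin.succ_last]; exact hl
      · intro i
        have := hs i.succ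
        rwa [← Fin.succ_castSucc] at this

lemma crossing {S : V → V → Prop} {P : V → Prop} {x y : V}
    (h : Relation.ReflTransGen S x y) (hx : P x) (hy : ¬ P y) :
    ∃ a b, S a b ∧ P a ∧ ¬ P b := by
  induction h with
  | refl => exact absurd hx hy
  | tail hxb hby ih =>
    rename_i b c
    by_cases hb : P b
    · exact ⟨b, c, hby, hb, hy⟩
    · exact ih hb

lemma first_arc {S : V → V → Prop} {x y : V}
    (h : Relation.ReflTransGen S x y) (hxy : x ≠ y) : ∃ c, S x c := by
  induction h with
  | refl => exact absurd rfl hxy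
  | tail hxb hby ih =>
    rename_i b c
    by_cases hxb' : x = b
    · exact ⟨c, hxb' ▸ hby⟩
    · exact ih hxb'

lemma last_arc {S : V → V → Prop} {x y : V}
    (h : Relation.ReflTransGen S x y) (hxy : x ≠ y) : ∃ d, S d y := by
  induction h with
  | refl => exact absurd rfl hxy
  | tail _ hby _ => exact ⟨_, hby⟩

/-! ### The extremal graph -/

/-- link arcs: v→x, x→w, w→y, y→v, w→z, z→v', v'→w -/
def linkarc (m a b : ℕ) : Prop :=
  (a % 7 = 0 ∧ b = a + 3 ∧ b < 7 * m) ∨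
  (a % 7 = 3 ∧ b = a + 2 ∧ a < 7 * m) ∨
  (a % 7 = 5 ∧ a = b + 1) ∨
  (a % 7 = 4 ∧ a = b + 4 ∧ a < 7 * m) ∨
  (a % 7 = 5 ∧ b = a + 1) ∨
  (a % 7 = 6 ∧ b = a + 1) ∨
  (a % 7 = 0 ∧ a = b + 2)

def triarc (q a b : ℕ) : Prop :=
  (a = 7 * q ∧ b = 7 * q + 1) ∨ (a = 7 * q + 1 ∧ b = 7 * q + 2) ∨
  (a = 7 * q + 2 ∧ b = 7 * q)

def extraarc (m a b : ℕ) : Prop :=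
  (a = 0 ∧ b = 7 * m + 3) ∨ (a = 7 * m + 3 ∧ b = 7 * m + 4) ∨ (a = 7 * m + 4 ∧ b = 0)

def arc (m a b : ℕ) : Prop :=
  (a % 7 = 0 ∧ b = a + 1) ∨ (a % 7 = 1 ∧ b = a + 1) ∨ (a % 7 = 2 ∧ a = b + 2) ∨
  linkarc m a b ∨ extraarc m a b

lemma triarc_arc {m q a b : ℕ} (hq : q ≤ m) (h : triarc q a b) : arc m a b := by
  rcases h with ⟨rfl, rfl⟩ | ⟨rfl, rfl⟩ | ⟨rfl, rfl⟩
  · exact Or.inl ⟨by omega, rfl⟩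
  · exact Or.inr (Or.inl ⟨by omega, rfl⟩)
  · exact Or.inr (Or.inr (Or.inl ⟨by omega, by omega⟩))

lemma linkarc_arc {m a b : ℕ} (h : linkarc m a b) : arc m a b :=
  Or.inr (Or.inr (Or.inr (Or.inl h)))

lemma extraarc_arc {m a b : ℕ} (h : extraarc m a b) : arc m a b :=
  Or.inr (Or.inr (Or.inr (Or.inr h)))

def Gr (m : ℕ) : SimpleGraph (Fin (7 * m + 5)) where
  Adj a b := arc m a.val b.val ∨ arc m b.val a.val
  symm := by constructor; intro a b h; tauto
  loopless := by
    constructor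
    intro a h
    have := a.isLt
    unfold arc linkarc extraarc at h; omega

def Ror (m : ℕ) : Fin (7 * m + 5) → Fin (7 * m + 5) → Prop :=
  fun a b => arc m a.val b.val

lemma arc_antisymm {m : ℕ} {a b : ℕ}
    (h : arc m a b) (h' : arc m b a) : False := by
  unfold arc linkarc extraarc at h h'; omega

lemma arc_ne {m : ℕ} {a b : ℕ} (h : arc m a b) : a ≠ b := by
  unfold arc linkarc extraarc at h; omega

lemma orientation_Ror (m : ℕ) : IsOrientation (Gr m) (Ror m) :=
  ⟨fun _ _ h => Or.inl h, fun _ _ h => h, fun _ _ h h' => arc_antisymm h h'⟩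

section Reach

variable {m : ℕ} {S : Fin (7 * m + 5) → Fin (7 * m + 5) → Prop}

open Relation

/-- good vertices: hubs and link vertices -/
def good (m k : ℕ) : Prop := k % 7 = 0 ∨ (3 ≤ k % 7 ∧ k < 7 * m)

lemma linkarc_good {a b : ℕ} (h : linkarc m a b) (ha : a < 7 * m + 5)
    (hb : b < 7 * m + 5) :
    good m a ∧ good m b := by
  unfold linkarc at h; unfold good; omega

lemma lstep' (hL : ∀ a b : Fin (7 * m + 5), linkarc m a.val b.val → S a b)
    {a b : ℕ} (ha : a < 7 * m + 5) (hb : b < 7 * m + 5) (h : linkarc m a b) :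
    Relation.ReflTransGen S ⟨a, ha⟩ ⟨b, hb⟩ :=
  ReflTransGen.single (hL ⟨a, ha⟩ ⟨b, hb⟩ h)

def hub0 (m : ℕ) : Fin (7 * m + 5) := ⟨0, by omega⟩

/-- any good vertex mutually reaches hub0 through link arcs -/
lemma good_reach (hL : ∀ a b : Fin (7 * m + 5), linkarc m a.val b.val → S a b) :
    ∀ k : ℕ, ∀ hk : k < 7 * m + 5, good m k →
      Relation.ReflTransGen S ⟨k, hk⟩ (hub0 m) ∧
      Relation.ReflTransGen S (hub0 m) ⟨k, hk⟩ := by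
  have hub : ∀ q : ℕ, (hq : q ≤ m) →
      Relation.ReflTransGen S ⟨7*q, by omega⟩ (hub0 m) ∧
      Relation.ReflTransGen S (hub0 m) ⟨7*q, by omega⟩ := by
    intro q
    induction q with
    | zero =>
      intro _
      constructor
      · exact ReflTransGen.refl
      · exact ReflTransGen.refl
    | succ p ih =>
      intro hq
      have hlt : p < m := by omega
      obtain ⟨ih1, ih2⟩ := ih (by omega)
      constructor
      · have s1 := lstep' hL (a := 7*(p+1)) (b := 7*p+5) (by omega) (by omega)
          (by unfold linkarc; omega)
        have s2 := lstep' hL (a := 7*p+5) (b := 7*p+4) (by omega) (by omega)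
          (by unfold linkarc; omega)
        have s3 := lstep' hL (a := 7*p+4) (b := 7*p) (by omega) (by omega)
          (by unfold linkarc; omega)
        exact ((s1.trans s2).trans s3).trans ih1
      · have s1 := lstep' hL (a := 7*p) (b := 7*p+3) (by omega) (by omega)
          (by unfold linkarc; omega)
        have s2 := lstep' hL (a := 7*p+3) (b := 7*p+5) (by omega) (by omega)
          (by unfold linkarc; omega)
        have s3 := lstep' hL (a := 7*p+5) (b := 7*p+6) (by omega) (by omega)
          (by unfold linkarc; omega)
        have s4 := lstep' hL (a := 7*p+6) (b := 7*(p+1)) (by omega) (by omega)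
          (by unfold linkarc; omega)
        exact ih2.trans (((s1.trans s2).trans s3).trans s4)
  intro k hk hg
  rcases hg with h0 | ⟨h3, hlt⟩
  · obtain ⟨q, rfl⟩ : ∃ q, k = 7 * q := ⟨k / 7, by omega⟩
    exact hub q (by omega)
  · set q := k / 7 with hqdef
    have hq : q < m := by omega
    obtain ⟨h1, h2⟩ := hub q (by omega)
    have vx := lstep' hL (a := 7*q) (b := 7*q+3) (by omega) (by omega)
      (by unfold linkarc; omega)
    have xw := lstep' hL (a := 7*q+3) (b := 7*q+5) (by omega) (by omega)
      (by unfold linkarc; omega)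
    have wy := lstep' hL (a := 7*q+5) (b := 7*q+4) (by omega) (by omega)
      (by unfold linkarc; omega)
    have yv := lstep' hL (a := 7*q+4) (b := 7*q) (by omega) (by omega)
      (by unfold linkarc; omega)
    have wz := lstep' hL (a := 7*q+5) (b := 7*q+6) (by omega) (by omega)
      (by unfold linkarc; omega)
    have zv' := lstep' hL (a := 7*q+6) (b := 7*(q+1)) (by omega) (by omega)
      (by unfold linkarc; omega)
    obtain ⟨h1', h2'⟩ := hub (q+1) (by omega)
    have r : k = 7*q+3 ∨ k = 7*q+4 ∨ k = 7*q+5 ∨ k = 7*q+6 := by omega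
    rcases r with h | h | h | h
    · have e : (⟨k, hk⟩ : Fin (7*m+5)) = ⟨7*q+3, by omega⟩ := by
        simp only [Fin.mk.injEq]; omega
      rw [e]
      exact ⟨((xw.trans wy).trans yv).trans h1, h2.trans vx⟩
    · have e : (⟨k, hk⟩ : Fin (7*m+5)) = ⟨7*q+4, by omega⟩ := by
        simp only [Fin.mk.injEq]; omega
      rw [e]
      exact ⟨yv.trans h1, ((h2.trans vx).trans xw).trans wy⟩
    · have e : (⟨k, hk⟩ : Fin (7*m+5)) = ⟨7*q+5, by omega⟩ := by
        simp only [Fin.mk.injEq]; omega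
      rw [e]
      exact ⟨(wy.trans yv).trans h1, (h2.trans vx).trans xw⟩
    · have e : (⟨k, hk⟩ : Fin (7*m+5)) = ⟨7*q+6, by omega⟩ := by
        simp only [Fin.mk.injEq]; omega
      rw [e]
      exact ⟨zv'.trans h1', ((h2.trans vx).trans xw).trans wz⟩

/-- triangle q arcs in S give mutual reach with the hub 7q -/
lemma tri_reach {t0 t1 t2 x : Fin (7 * m + 5)} {q : ℕ}
    (e0 : t0.val = 7*q) (e1 : t1.val = 7*q+1) (e2 : t2.val = 7*q+2)
    (h1 : S t0 t1) (h2 : S t1 t2) (h3 : S t2 t0)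
    (hx : x = t0 ∨ x = t1 ∨ x = t2) :
    Relation.ReflTransGen S x t0 ∧ Relation.ReflTransGen S t0 x := by
  have s1 := ReflTransGen.single h1
  have s2 := ReflTransGen.single h2
  have s3 := ReflTransGen.single h3
  rcases hx with rfl | rfl | rfl
  · exact ⟨ReflTransGen.refl, ReflTransGen.refl⟩
  · exact ⟨s2.trans s3, s1⟩
  · exact ⟨s3, s1.trans s2⟩

end Reach

section Basics

variable {m : ℕ}

open Relation

def sA (m : ℕ) : Fin (7 * m + 5) := ⟨7 * m + 3, by omega⟩
def sB (m : ℕ) : Fin (7 * m + 5) := ⟨7 * m + 4, by omega⟩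

lemma extra_reach {S : Fin (7 * m + 5) → Fin (7 * m + 5) → Prop} {x : Fin (7 * m + 5)}
    (h1 : S (hub0 m) (sA m)) (h2 : S (sA m) (sB m)) (h3 : S (sB m) (hub0 m))
    (hx : x = sA m ∨ x = sB m) :
    Relation.ReflTransGen S x (hub0 m) ∧ Relation.ReflTransGen S (hub0 m) x := by
  have s1 := ReflTransGen.single h1
  have s2 := ReflTransGen.single h2
  have s3 := ReflTransGen.single h3
  rcases hx with rfl | rfl
  · exact ⟨s2.trans s3, s1⟩
  · exact ⟨s3, s1.trans s2⟩

/-- every vertex mutually reaches hub0 in the standard orientation -/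
lemma ror_reach (x : Fin (7 * m + 5)) :
    Relation.ReflTransGen (Ror m) x (hub0 m) ∧
    Relation.ReflTransGen (Ror m) (hub0 m) x := by
  have hL : ∀ a b : Fin (7 * m + 5), linkarc m a.val b.val → Ror m a b :=
    fun a b h => linkarc_arc h
  have hx := x.isLt
  by_cases hg : good m x.val
  · have := good_reach hL x.val x.isLt hg
    rwa [Fin.eta] at this
  · by_cases ht : x.val % 7 = 1 ∨ x.val % 7 = 2
    · set q := x.val / 7 with hq
      have hqm : q ≤ m := by unfold good at hg; omega
      have h1 : Ror m ⟨7*q, by omega⟩ ⟨7*q+1, by omega⟩ :=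
        triarc_arc hqm (Or.inl ⟨rfl, rfl⟩)
      have h2 : Ror m ⟨7*q+1, by omega⟩ ⟨7*q+2, by omega⟩ :=
        triarc_arc hqm (Or.inr (Or.inl ⟨rfl, rfl⟩))
      have h3 : Ror m ⟨7*q+2, by omega⟩ ⟨7*q, by omega⟩ :=
        triarc_arc hqm (Or.inr (Or.inr ⟨rfl, rfl⟩))
      have hx3 : x = (⟨7*q+1, by omega⟩ : Fin (7*m+5)) ∨ x = ⟨7*q+2, by omega⟩ := by
        rcases ht with h | h
        · left; apply Fin.ext; simp only [Fin.val_mk]; omega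
        · right; apply Fin.ext; simp only [Fin.val_mk]; omega
      have := tri_reach (t0 := ⟨7*q, by omega⟩) rfl rfl rfl h1 h2 h3 (Or.inr hx3)
      have hg0 : good m (7*q) := Or.inl (by omega)
      have h0 := good_reach hL (7*q) (by omega) hg0
      exact ⟨this.1.trans h0.1, h0.2.trans this.2⟩
    · have hex : x = sA m ∨ x = sB m := by
        unfold good at hg
        have : x.val = 7*m+3 ∨ x.val = 7*m+4 := by omega
        rcases this with h | h
        · left; apply Fin.ext; rw [h]; rfl
        · right; apply Fin.ext; rw [h]; rfl
      exact extra_reach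
        (extraarc_arc (Or.inl ⟨rfl, rfl⟩))
        (extraarc_arc (Or.inr (Or.inl ⟨rfl, rfl⟩)))
        (extraarc_arc (Or.inr (Or.inr ⟨rfl, rfl⟩))) hex

lemma ror_rtg (x y : Fin (7 * m + 5)) : Relation.ReflTransGen (Ror m) x y :=
  (ror_reach x).1.trans (ror_reach y).2

lemma isStrong_Ror (m : ℕ) : IsStrong (Ror m) := fun u v =>
  reflTransGen_iff_dirWalk.mp (ror_rtg u v)

lemma rtg_reachable {W : Type*} {G : SimpleGraph W} {S : W → W → Prop}
    (hS : ∀ a b, S a b → G.Adj a b) {u v : W}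
    (h : Relation.ReflTransGen S u v) : G.Reachable u v := by
  induction h with
  | refl => exact Reachable.refl _
  | tail _ hbc ih => exact ih.trans (hS _ _ hbc).reachable

lemma connected_Gr (m : ℕ) : (Gr m).Connected := by
  rw [connected_iff]
  refine ⟨fun u v => rtg_reachable (fun a b h => Or.inl h) (ror_rtg u v), ⟨hub0 m⟩⟩

end Basics

section Bridge

variable {m : ℕ}

/-- adjacency in the graph with one edge deleted -/
lemma del_adj {a b x y : Fin (7 * m + 5)} (hadj : (Gr m).Adj x y)
    (hne : ¬((x.val = a.val ∧ y.val = b.val) ∨ (x.val = b.val ∧ y.val = a.val))) :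
    ((Gr m) \ SimpleGraph.fromEdgeSet {s(a, b)}).Adj x y := by
  rw [SimpleGraph.sdiff_adj]
  refine ⟨hadj, ?_⟩
  rw [SimpleGraph.fromEdgeSet_adj]
  rintro ⟨hmem, -⟩
  rw [Set.mem_singleton_iff, Sym2.eq_iff] at hmem
  rcases hmem with ⟨rfl, rfl⟩ | ⟨rfl, rfl⟩
  · exact hne (Or.inl ⟨rfl, rfl⟩)
  · exact hne (Or.inr ⟨rfl, rfl⟩)

lemma gr_adj_of_arc {x y : ℕ} (hx : x < 7*m+5) (hy : y < 7*m+5) (h : arc m x y) :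
    (Gr m).Adj ⟨x, hx⟩ ⟨y, hy⟩ := Or.inl h

lemma gr_adj_of_arc' {x y : ℕ} (hx : x < 7*m+5) (hy : y < 7*m+5) (h : arc m y x) :
    (Gr m).Adj ⟨x, hx⟩ ⟨y, hy⟩ := Or.inr h

lemma route_of_arc {a b : Fin (7 * m + 5)} (h : arc m a.val b.val) :
    ((Gr m) \ SimpleGraph.fromEdgeSet {s(a, b)}).Reachable a b := by
  obtain ⟨av, ha⟩ := a
  obtain ⟨bv, hb⟩ := b
  simp only at h ⊢
  have key : ∀ c : ℕ, ∀ hc : c < 7*m+5,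
      (Gr m).Adj ⟨av, ha⟩ ⟨c, hc⟩ → (Gr m).Adj ⟨c, hc⟩ ⟨bv, hb⟩ →
      av ≠ c → bv ≠ c →
      ((Gr m) \ SimpleGraph.fromEdgeSet {s(⟨av, ha⟩, ⟨bv, hb⟩)}).Reachable ⟨av, ha⟩ ⟨bv, hb⟩ := by
    intro c hc h1 h2 hac hbc
    have hab : av ≠ bv := arc_ne h
    exact ((del_adj h1 (by simp only [Fin.val_mk]; omega)).reachable).trans
      ((del_adj h2 (by simp only [Fin.val_mk]; omega)).reachable)
  have key3 : ∀ c d : ℕ, ∀ hc : c < 7*m+5, ∀ hd : d < 7*m+5,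
      (Gr m).Adj ⟨av, ha⟩ ⟨c, hc⟩ → (Gr m).Adj ⟨c, hc⟩ ⟨d, hd⟩ →
      (Gr m).Adj ⟨d, hd⟩ ⟨bv, hb⟩ →
      bv ≠ c → av ≠ d → (av ≠ c ∨ bv ≠ d) →
      ((Gr m) \ SimpleGraph.fromEdgeSet {s(⟨av, ha⟩, ⟨bv, hb⟩)}).Reachable ⟨av, ha⟩ ⟨bv, hb⟩ := by
    intro c d hc hd h1 h2 h3 n1 n2 n3
    have hab : av ≠ bv := arc_ne h
    exact (((del_adj h1 (by simp only [Fin.val_mk]; omega)).reachable).trans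
      ((del_adj h2 (by simp only [Fin.val_mk]; omega)).reachable)).trans
      ((del_adj h3 (by simp only [Fin.val_mk]; omega)).reachable)
  rcases h with ⟨h7, rfl⟩ | ⟨h7, rfl⟩ | ⟨h7, hveq⟩ | hlk | hex
  · -- v→t1 : route av → av+2 → av+1
    refine key (av+2) (by omega) ?_ ?_ (by omega) (by omega)
    · exact gr_adj_of_arc' _ _ (Or.inr (Or.inr (Or.inl ⟨by omega, by omega⟩)))
    · exact gr_adj_of_arc' _ _ (Or.inr (Or.inl ⟨by omega, by omega⟩))
  · -- t1→t2 : route av → av-1 → av+1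
    refine key (av-1) (by omega) ?_ ?_ (by omega) (by omega)
    · exact gr_adj_of_arc' _ _ (Or.inl ⟨by omega, by omega⟩)
    · exact gr_adj_of_arc' _ _ (Or.inr (Or.inr (Or.inl ⟨by omega, by omega⟩)))
  · -- t2→v : route av → av-1 → bv
    refine key (av-1) (by omega) ?_ ?_ (by omega) (by omega)
    · exact gr_adj_of_arc' _ _ (Or.inr (Or.inl ⟨by omega, by omega⟩))
    · exact gr_adj_of_arc' _ _ (Or.inl ⟨by omega, by omega⟩)
  · rcases hlk with ⟨h7, rfl, hlt⟩ | ⟨h7, rfl, hlt⟩ | ⟨h7, hveq⟩ | ⟨h7, hveq, hlt⟩ |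
      ⟨h7, rfl⟩ | ⟨h7, rfl⟩ | ⟨h7, hveq⟩
    · -- v→x : route av → av+4 → av+5 → av+3
      refine key3 (av+4) (av+5) (by omega) (by omega) ?_ ?_ ?_ (by omega) (by omega) (by omega)
      · exact gr_adj_of_arc' _ _ (linkarc_arc (by unfold linkarc; omega))
      · exact gr_adj_of_arc' _ _ (linkarc_arc (by unfold linkarc; omega))
      · exact gr_adj_of_arc' _ _ (linkarc_arc (by unfold linkarc; omega))
    · -- x→w : route av → av-3 → av+1 → av+2
      refine key3 (av-3) (av+1) (by omega) (by omega) ?_ ?_ ?_ (by omega) (by omega) (by omega)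
      · exact gr_adj_of_arc' _ _ (linkarc_arc (by unfold linkarc; omega))
      · exact gr_adj_of_arc' _ _ (linkarc_arc (by unfold linkarc; omega))
      · exact gr_adj_of_arc' _ _ (linkarc_arc (by unfold linkarc; omega))
    · -- w→y : route av → av-2 → av-5 → bv
      refine key3 (av-2) (av-5) (by omega) (by omega) ?_ ?_ ?_ (by omega) (by omega) (by omega)
      · exact gr_adj_of_arc' _ _ (linkarc_arc (by unfold linkarc; omega))
      · exact gr_adj_of_arc' _ _ (linkarc_arc (by unfold linkarc; omega))
      · exact gr_adj_of_arc' _ _ (linkarc_arc (by unfold linkarc; omega))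
    · -- y→v : route av → av+1 → av-1 → bv
      refine key3 (av+1) (av-1) (by omega) (by omega) ?_ ?_ ?_ (by omega) (by omega) (by omega)
      · exact gr_adj_of_arc' _ _ (linkarc_arc (by unfold linkarc; omega))
      · exact gr_adj_of_arc' _ _ (linkarc_arc (by unfold linkarc; omega))
      · exact gr_adj_of_arc' _ _ (linkarc_arc (by unfold linkarc; omega))
    · -- w→z : route av → av+2 → av+1
      refine key (av+2) (by omega) ?_ ?_ (by omega) (by omega)
      · exact gr_adj_of_arc' _ _ (linkarc_arc (by unfold linkarc; omega))
      · exact gr_adj_of_arc' _ _ (linkarc_arc (by unfold linkarc; omega))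
    · -- z→v' : route av → av-1 → av+1
      refine key (av-1) (by omega) ?_ ?_ (by omega) (by omega)
      · exact gr_adj_of_arc' _ _ (linkarc_arc (by unfold linkarc; omega))
      · exact gr_adj_of_arc' _ _ (linkarc_arc (by unfold linkarc; omega))
    · -- v'→w : route av → av-1 → bv
      refine key (av-1) (by omega) ?_ ?_ (by omega) (by omega)
      · exact gr_adj_of_arc' _ _ (linkarc_arc (by unfold linkarc; omega))
      · exact gr_adj_of_arc' _ _ (linkarc_arc (by unfold linkarc; omega))
  · rcases hex with ⟨hv0, rfl⟩ | ⟨hv1, rfl⟩ | ⟨hv1, rfl⟩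
    · -- 0→s1 : route 0 → 7m+4 → 7m+3
      refine key (7*m+4) (by omega) ?_ ?_ (by omega) (by omega)
      · exact gr_adj_of_arc' _ _ (extraarc_arc (by unfold extraarc; omega))
      · exact gr_adj_of_arc' _ _ (extraarc_arc (by unfold extraarc; omega))
    · -- s1→s2 : route av → 0 → 7m+4
      refine key 0 (by omega) ?_ ?_ (by omega) (by omega)
      · exact gr_adj_of_arc' _ _ (extraarc_arc (by unfold extraarc; omega))
      · exact gr_adj_of_arc' _ _ (extraarc_arc (by unfold extraarc; omega))
    · -- s2→0 : route av → 7m+3 → 0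
      refine key (7*m+3) (by omega) ?_ ?_ (by omega) (by omega)
      · exact gr_adj_of_arc' _ _ (extraarc_arc (by unfold extraarc; omega))
      · exact gr_adj_of_arc' _ _ (extraarc_arc (by unfold extraarc; omega))

lemma bridgeless_Gr (m : ℕ) : IsBridgeless (Gr m) := by
  intro e
  induction e with
  | _ a b =>
    intro hb
    obtain ⟨hadj, hreach⟩ : (Gr m).Adj a b ∧ ¬ ((Gr m).deleteEdges {s(a, b)}).Reachable a b :=
      ⟨hb.reachable_iff_adj.mp ((connected_Gr m).preconnected a b), SimpleGraph.isBridge_iff.mp hb⟩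
    rcases hadj with h | h
    · exact hreach (route_of_arc h)
    · have := (route_of_arc (a := b) (b := a) h).symm
      rw [Sym2.eq_swap] at this
      exact hreach this
end Bridge

section Domination

variable {m : ℕ}

lemma dom_upper (m : ℕ) :
    ∃ D : Set (Fin (7*m+5)), D.ncard = m + 1 ∧ IsDominating (Gr m) D := by
  refine ⟨Set.range (fun i : Fin (m+1) => (⟨7*i.val, by omega⟩ : Fin (7*m+5))), ?_, ?_⟩
  · rw [← Set.image_univ, Set.ncard_image_of_injective _ ?_, Set.ncard_univ,
      Nat.card_eq_fintype_card, Fintype.card_fin]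
    intro i j hij
    simp only [Fin.mk.injEq] at hij
    exact Fin.ext (by omega)
  · intro x hx
    obtain ⟨xv, hxb⟩ := x
    have hx0 : ¬ (xv % 7 = 0) := by
      intro h0
      exact hx ⟨⟨xv/7, by omega⟩, Fin.ext (by simp only [Fin.val_mk]; omega)⟩
    -- the dominating hub value
    have : ∃ h : ℕ, h % 7 = 0 ∧ h < 7*m+5 ∧ (arc m h xv ∨ arc m xv h) := by
      have h7 := Nat.mod_lt xv (y := 7) (by omega)
      rcases (by omega : xv % 7 = 1 ∨ xv % 7 = 2 ∨ xv % 7 = 3 ∨ xv % 7 = 4 ∨ xv % 7 = 5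
          ∨ xv % 7 = 6) with h | h | h | h | h | h
      · exact ⟨xv - 1, by omega, by omega, Or.inl (Or.inl ⟨by omega, by omega⟩)⟩
      · exact ⟨xv - 2, by omega, by omega,
          Or.inr (Or.inr (Or.inr (Or.inl ⟨by omega, by omega⟩)))⟩
      · -- x or s1
        by_cases hs : xv = 7*m+3
        · exact ⟨0, by omega, by omega, Or.inl (extraarc_arc (Or.inl ⟨rfl, by omega⟩))⟩
        · exact ⟨xv - 3, by omega, by omega,
            Or.inl (linkarc_arc (Or.inl ⟨by omega, by omega, by omega⟩))⟩
      · -- y or s2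
        by_cases hs : xv = 7*m+4
        · exact ⟨0, by omega, by omega,
            Or.inr (extraarc_arc (Or.inr (Or.inr ⟨by omega, by omega⟩)))⟩
        · exact ⟨xv - 4, by omega, by omega,
            Or.inr (linkarc_arc (Or.inr (Or.inr (Or.inr (Or.inl ⟨by omega, by omega, by omega⟩)))))⟩
      · -- w : dominated by v' = xv+2
        exact ⟨xv + 2, by omega, by omega,
          Or.inl (linkarc_arc (Or.inr (Or.inr (Or.inr (Or.inr (Or.inr (Or.inr ⟨by omega, by omega⟩)))))))⟩
      · -- z : dominated by v' = xv+1
        exact ⟨xv + 1, by omega, by omega,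
          Or.inr (linkarc_arc (Or.inr (Or.inr (Or.inr (Or.inr (Or.inr (Or.inl ⟨by omega, by omega⟩)))))))⟩
    obtain ⟨hv, hmod, hlt, hadj⟩ := this
    refine ⟨⟨hv, hlt⟩, ⟨⟨hv/7, by omega⟩, Fin.ext (by simp only [Fin.val_mk]; omega)⟩, hadj⟩

lemma dom_lower {n : ℕ} (D : Set (Fin (7*m+5))) (hcard : D.ncard = n)
    (hdom : IsDominating (Gr m) D) : m + 1 ≤ n := by
  classical
  have himg : ∀ q : ℕ, q ≤ m → q ∈ (fun d : Fin (7*m+5) => d.val / 7) '' D := by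
    intro q hq
    by_cases hD : (⟨7*q+1, by omega⟩ : Fin (7*m+5)) ∈ D
    · exact ⟨_, hD, by simp only [Fin.val_mk]; omega⟩
    · obtain ⟨u, hu, hadj⟩ := hdom _ hD
      refine ⟨u, hu, ?_⟩
      obtain ⟨uv, hub⟩ := u
      have : arc m uv (7*q+1) ∨ arc m (7*q+1) uv := hadj
      unfold arc linkarc extraarc at this
      simp only [Fin.val_mk] at this ⊢
      omega
  have hsub : ↑(Finset.range (m+1)) ⊆ (fun d : Fin (7*m+5) => d.val / 7) '' D := by
    intro k hk
    simp only [Finset.coe_range, Set.mem_Iio] at hk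
    exact himg k (by omega)
  calc m + 1 = (↑(Finset.range (m+1)) : Set ℕ).ncard := by
        rw [Set.ncard_coe_finset, Finset.card_range]
    _ ≤ ((fun d : Fin (7*m+5) => d.val / 7) '' D).ncard :=
        Set.ncard_le_ncard hsub ((D.toFinite).image _)
    _ ≤ D.ncard := Set.ncard_image_le D.toFinite
    _ = n := hcard

lemma dominationNumber_Gr (m : ℕ) : dominationNumber (Gr m) = m + 1 := by
  apply le_antisymm
  · obtain ⟨D, h1, h2⟩ := dom_upper m
    exact Nat.sInf_le ⟨D, h1, h2⟩
  · apply le_csInf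
    · obtain ⟨D, h1, h2⟩ := dom_upper m
      exact ⟨m+1, D, h1, h2⟩
    · rintro n ⟨D, h1, h2⟩
      exact dom_lower D h1 h2

end Domination

section Upper

open Relation

variable {m : ℕ}

def linkSet (m : ℕ) : Set (Fin (7*m+5) × Fin (7*m+5)) := {p | linkarc m p.1.val p.2.val}

def triSet (m q : ℕ) : Set (Fin (7*m+5) × Fin (7*m+5)) := {p | triarc q p.1.val p.2.val}

def extraSet (m : ℕ) : Set (Fin (7*m+5) × Fin (7*m+5)) := {p | extraarc m p.1.val p.2.val}

def triOf (m : ℕ) (u : Fin (7*m+5)) : Set (Fin (7*m+5) × Fin (7*m+5)) :=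
  if 7*m+3 ≤ u.val then extraSet m else triSet m (u.val / 7)

def ASet (m : ℕ) (u v : Fin (7*m+5)) : Set (Fin (7*m+5) × Fin (7*m+5)) :=
  (linkSet m ∪ triOf m u) ∪ triOf m v

lemma triOf_sub_arc {u : Fin (7*m+5)} {p : Fin (7*m+5) × Fin (7*m+5)}
    (hp : p ∈ triOf m u) : arc m p.1.val p.2.val := by
  rw [triOf] at hp
  split_ifs at hp with h
  · exact extraarc_arc hp
  · have : u.val < 7*m+5 := u.isLt
    exact triarc_arc (by omega) hp

lemma aset_sub_arc {u v : Fin (7*m+5)} {p : Fin (7*m+5) × Fin (7*m+5)}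
    (hp : p ∈ ASet m u v) : arc m p.1.val p.2.val := by
  rcases hp with (h | h) | h
  · exact linkarc_arc h
  · exact triOf_sub_arc h
  · exact triOf_sub_arc h

/-- reachability to hub0 for `w` itself and all endpoints of `triOf w`,
given the link arcs and `triOf w` are in `S`. -/
lemma reach_of_triOf_sub {S : Fin (7*m+5) → Fin (7*m+5) → Prop}
    (hL : ∀ a b : Fin (7*m+5), linkarc m a.val b.val → S a b)
    {w : Fin (7*m+5)} (hsub : ∀ a b : Fin (7*m+5), (a, b) ∈ triOf m w → S a b)
    (x : Fin (7*m+5)) (hx : x = w ∨ ∃ p ∈ triOf m w, x = p.1 ∨ x = p.2) :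
    Relation.ReflTransGen S x (hub0 m) ∧ Relation.ReflTransGen S (hub0 m) x := by
  by_cases hgx : good m x.val
  · have := good_reach hL x.val x.isLt hgx
    rwa [Fin.eta] at this
  by_cases hw : 7*m+3 ≤ w.val
  · rw [triOf, if_pos hw] at hsub hx
    have hA : S (hub0 m) (sA m) := hsub _ _ (Or.inl ⟨rfl, rfl⟩)
    have hB : S (sA m) (sB m) := hsub _ _ (Or.inr (Or.inl ⟨rfl, rfl⟩))
    have hC : S (sB m) (hub0 m) := hsub _ _ (Or.inr (Or.inr ⟨rfl, rfl⟩))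
    have hxv : x.val = 7*m+3 ∨ x.val = 7*m+4 := by
      rcases hx with rfl | ⟨p, hp, hx12⟩
      · have := x.isLt; omega
      · have hp' : extraarc m p.1.val p.2.val := hp
        unfold extraarc at hp'
        have h1 := p.1.isLt
        have h2 := p.2.isLt
        unfold good at hgx
        have := x.isLt
        rcases hx12 with rfl | rfl <;> omega
    refine extra_reach hA hB hC ?_
    rcases hxv with h | h
    · exact Or.inl (Fin.ext h)
    · exact Or.inr (Fin.ext h)
  · rw [triOf, if_neg hw] at hsub hx
    set q := w.val / 7 with hqdef
    have hwlt : w.val < 7*m+5 := w.isLt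
    have hq : q ≤ m := by omega
    have h1 : S ⟨7*q, by omega⟩ ⟨7*q+1, by omega⟩ := hsub _ _ (Or.inl ⟨rfl, rfl⟩)
    have h2 : S ⟨7*q+1, by omega⟩ ⟨7*q+2, by omega⟩ := hsub _ _ (Or.inr (Or.inl ⟨rfl, rfl⟩))
    have h3 : S ⟨7*q+2, by omega⟩ ⟨7*q, by omega⟩ := hsub _ _ (Or.inr (Or.inr ⟨rfl, rfl⟩))
    have hxv : x.val = 7*q+1 ∨ x.val = 7*q+2 := by
      rcases hx with rfl | ⟨p, hp, hx12⟩
      · unfold good at hgx; omega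
      · have hp' : triarc q p.1.val p.2.val := hp
        unfold triarc at hp'
        unfold good at hgx
        have := x.isLt
        rcases hx12 with rfl | rfl <;> omega
    have hx3 : x = (⟨7*q+1, by omega⟩ : Fin (7*m+5)) ∨ x = ⟨7*q+2, by omega⟩ := by
      rcases hxv with h | h
      · exact Or.inl (Fin.ext h)
      · exact Or.inr (Fin.ext h)
    have htri := tri_reach (t0 := (⟨7*q, by omega⟩ : Fin (7*m+5))) rfl rfl rfl h1 h2 h3
      (Or.inr hx3)
    have hgood := good_reach hL (7*q) (by omega) (Or.inl (by omega))
    exact ⟨htri.1.trans hgood.1, hgood.2.trans htri.2⟩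

lemma aset_strongSubOn (u v : Fin (7*m+5)) : IsStrongSubOn (Ror m) u v (ASet m u v) := by
  constructor
  · exact fun p hp => aset_sub_arc hp
  · have hL : ∀ a b : Fin (7*m+5), linkarc m a.val b.val → (a, b) ∈ ASet m u v :=
      fun a b h => Or.inl (Or.inl h)
    have hsubu : ∀ a b : Fin (7*m+5), (a, b) ∈ triOf m u → (a, b) ∈ ASet m u v :=
      fun a b h => Or.inl (Or.inr h)
    have hsubv : ∀ a b : Fin (7*m+5), (a, b) ∈ triOf m v → (a, b) ∈ ASet m u v :=
      fun a b h => Or.inr h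
    have key : ∀ x ∈ insert u (insert v
        (Prod.fst '' ASet m u v ∪ Prod.snd '' ASet m u v)),
        Relation.ReflTransGen (fun a b => (a, b) ∈ ASet m u v) x (hub0 m) ∧
        Relation.ReflTransGen (fun a b => (a, b) ∈ ASet m u v) (hub0 m) x := by
      intro x hx
      rcases hx with rfl | rfl | hx
      · exact reach_of_triOf_sub hL hsubu x (Or.inl rfl)
      · exact reach_of_triOf_sub hL hsubv x (Or.inl rfl)
      · have : ∃ p ∈ ASet m u v, x = p.1 ∨ x = p.2 := by
          rcases hx with ⟨p, hp, rfl⟩ | ⟨p, hp, rfl⟩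
          · exact ⟨p, hp, Or.inl rfl⟩
          · exact ⟨p, hp, Or.inr rfl⟩
        obtain ⟨p, hp, hx12⟩ := this
        rcases hp with (h | h) | h
        · -- link arc endpoints are good
          have hg := linkarc_good h p.1.isLt p.2.isLt
          rcases hx12 with rfl | rfl
          · have := good_reach hL _ p.1.isLt hg.1
            rwa [Fin.eta] at this
          · have := good_reach hL _ p.2.isLt hg.2
            rwa [Fin.eta] at this
        · exact reach_of_triOf_sub hL hsubu x (Or.inr ⟨p, h, hx12⟩)
        · exact reach_of_triOf_sub hL hsubv x (Or.inr ⟨p, h, hx12⟩)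
    intro x hx y hy
    exact ((key x hx).1.trans (key y hy).2).head_induction_on
      (Relation.ReflTransGen.refl) (fun h _ ih => Relation.ReflTransGen.head h ih)

end Upper

section Count

variable {m : ℕ}

def lkN (j r : ℕ) : ℕ × ℕ :=
  if r = 0 then (7*j, 7*j+3)
  else if r = 1 then (7*j+3, 7*j+5)
  else if r = 2 then (7*j+5, 7*j+4)
  else if r = 3 then (7*j+4, 7*j)
  else if r = 4 then (7*j+5, 7*j+6)
  else if r = 5 then (7*j+6, 7*j+7)
  else (7*j+7, 7*j+5)

lemma linkarc_lkN {a b : ℕ} (ha : a < 7*m+5) (hb : b < 7*m+5) (h : linkarc m a b) :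
    ∃ x ∈ Finset.range m ×ˢ Finset.range 7, lkN x.1 x.2 = (a, b) := by
  rcases h with ⟨h1, h2, h3⟩ | ⟨h1, h2, h3⟩ | ⟨h1, h2⟩ | ⟨h1, h2, h3⟩ | ⟨h1, h2⟩ |
    ⟨h1, h2⟩ | ⟨h1, h2⟩
  · exact ⟨(a/7, 0), by simp [Finset.mem_product]; omega, by simp [lkN, Prod.ext_iff]; omega⟩
  · exact ⟨(a/7, 1), by simp [Finset.mem_product]; omega, by simp [lkN, Prod.ext_iff]; omega⟩
  · exact ⟨(a/7, 2), by simp [Finset.mem_product]; omega, by simp [lkN, Prod.ext_iff]; omega⟩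
  · exact ⟨(a/7, 3), by simp [Finset.mem_product]; omega, by simp [lkN, Prod.ext_iff]; omega⟩
  · exact ⟨(a/7, 4), by simp [Finset.mem_product]; omega, by simp [lkN, Prod.ext_iff]; omega⟩
  · exact ⟨(a/7, 5), by simp [Finset.mem_product]; omega, by simp [lkN, Prod.ext_iff]; omega⟩
  · exact ⟨(b/7, 6), by simp [Finset.mem_product]; omega, by simp [lkN, Prod.ext_iff]; omega⟩

lemma ncard_linkSet (m : ℕ) : (linkSet m).ncard ≤ 7 * m := by
  classical
  have hinj : Function.Injective
      (fun p : Fin (7*m+5) × Fin (7*m+5) => (p.1.val, p.2.val)) := by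
    intro p q h
    simp only [Prod.mk.injEq] at h
    exact Prod.ext (Fin.ext h.1) (Fin.ext h.2)
  rw [← Set.ncard_image_of_injective (linkSet m) hinj]
  have hsub : (fun p : Fin (7*m+5) × Fin (7*m+5) => (p.1.val, p.2.val)) '' linkSet m ⊆
      ↑((Finset.range m ×ˢ Finset.range 7).image (fun x => lkN x.1 x.2)) := by
    rintro z ⟨p, hp, rfl⟩
    simp only [Finset.coe_image, Set.mem_image, Finset.mem_coe]
    obtain ⟨x, hx, hex⟩ := linkarc_lkN p.1.isLt p.2.isLt hp
    exact ⟨x, hx, hex⟩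
  calc ((fun p : Fin (7*m+5) × Fin (7*m+5) => (p.1.val, p.2.val)) '' linkSet m).ncard
      ≤ _ := Set.ncard_le_ncard hsub (Set.toFinite _)
    _ = ((Finset.range m ×ˢ Finset.range 7).image (fun x => lkN x.1 x.2)).card :=
        Set.ncard_coe_finset _
    _ ≤ (Finset.range m ×ˢ Finset.range 7).card := Finset.card_image_le
    _ = 7 * m := by rw [Finset.card_product, Finset.card_range, Finset.card_range]; ring

lemma ncard_triOf (u : Fin (7*m+5)) : (triOf m u).ncard ≤ 3 := by
  rw [triOf]
  split_ifs with h
  · have hsub : extraSet m ⊆ {((hub0 m), (sA m)), ((sA m), (sB m)), ((sB m), (hub0 m))} := by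
      rintro ⟨p1, p2⟩ hp
      have hp' : extraarc m p1.val p2.val := hp
      unfold extraarc at hp'
      simp only [Set.mem_insert_iff, Set.mem_singleton_iff, Prod.mk.injEq]
      rcases hp' with ⟨e1, e2⟩ | ⟨e1, e2⟩ | ⟨e1, e2⟩
      · exact Or.inl ⟨Fin.ext e1, Fin.ext e2⟩
      · exact Or.inr (Or.inl ⟨Fin.ext e1, Fin.ext e2⟩)
      · exact Or.inr (Or.inr ⟨Fin.ext e1, Fin.ext e2⟩)
    refine le_trans (Set.ncard_le_ncard hsub (Set.toFinite _)) ?_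
    refine le_trans (Set.ncard_insert_le _ _) ?_
    refine Nat.succ_le_succ ?_
    refine le_trans (Set.ncard_insert_le _ _) (Nat.succ_le_succ (le_of_eq (Set.ncard_singleton _)))
  · set q := u.val / 7 with hqdef
    have hu := u.isLt
    have hq : q ≤ m := by omega
    have hsub : triSet m q ⊆ {((⟨7*q, by omega⟩ : Fin (7*m+5)), (⟨7*q+1, by omega⟩ : Fin (7*m+5))),
        ((⟨7*q+1, by omega⟩ : Fin (7*m+5)), (⟨7*q+2, by omega⟩ : Fin (7*m+5))),
        ((⟨7*q+2, by omega⟩ : Fin (7*m+5)), (⟨7*q, by omega⟩ : Fin (7*m+5)))} := by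
      rintro ⟨p1, p2⟩ hp
      have hp' : triarc q p1.val p2.val := hp
      unfold triarc at hp'
      simp only [Set.mem_insert_iff, Set.mem_singleton_iff, Prod.mk.injEq]
      rcases hp' with ⟨e1, e2⟩ | ⟨e1, e2⟩ | ⟨e1, e2⟩
      · exact Or.inl ⟨Fin.ext e1, Fin.ext e2⟩
      · exact Or.inr (Or.inl ⟨Fin.ext e1, Fin.ext e2⟩)
      · exact Or.inr (Or.inr ⟨Fin.ext e1, Fin.ext e2⟩)
    refine le_trans (Set.ncard_le_ncard hsub (Set.toFinite _)) ?_
    refine le_trans (Set.ncard_insert_le _ _) ?_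
    refine Nat.succ_le_succ ?_
    refine le_trans (Set.ncard_insert_le _ _) (Nat.succ_le_succ (le_of_eq (Set.ncard_singleton _)))

lemma ncard_ASet (u v : Fin (7*m+5)) : (ASet m u v).ncard ≤ 7*m+6 := by
  calc (ASet m u v).ncard ≤ (linkSet m ∪ triOf m u).ncard + (triOf m v).ncard :=
        Set.ncard_union_le _ _
    _ ≤ ((linkSet m).ncard + (triOf m u).ncard) + (triOf m v).ncard :=
        Nat.add_le_add_right (Set.ncard_union_le _ _) _
    _ ≤ (7*m + 3) + 3 := by
        have := ncard_linkSet m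
        have := ncard_triOf (m := m) u
        have := ncard_triOf (m := m) v
        omega
    _ = 7*m+6 := by ring

lemma sdist_Ror_le (u v : Fin (7*m+5)) : sdist (Ror m) u v ≤ 7*m+6 := by
  refine le_trans (Nat.sInf_le ⟨ASet m u v, Set.toFinite _, rfl, aset_strongSubOn u v⟩) ?_
  exact ncard_ASet u v

end Count

section Lower

variable {m : ℕ}

/-- ordered edge index: triangle edges at unit m and the extra triangle get
indices 7m..7m+5, link j edges get 7j..7j+6 -/
def eo (m lo hi : ℕ) : ℕ :=
  if lo = 0 ∧ hi = 7*m+3 then 7*m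
  else if lo = 7*m+3 ∧ hi = 7*m+4 then 7*m+1
  else if lo = 0 ∧ hi = 7*m+4 then 7*m+2
  else if lo = 7*m ∧ hi = 7*m+1 then 7*m+3
  else if lo = 7*m+1 ∧ hi = 7*m+2 then 7*m+4
  else if lo = 7*m ∧ hi = 7*m+2 then 7*m+5
  else if lo % 7 = 0 ∧ hi = lo+3 then lo
  else if lo % 7 = 3 ∧ hi = lo+2 then lo-2
  else if lo % 7 = 4 ∧ hi = lo+1 then lo-2
  else if lo % 7 = 0 ∧ hi = lo+4 then lo+3
  else if lo % 7 = 5 ∧ hi = lo+1 then lo-1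
  else if lo % 7 = 6 ∧ hi = lo+1 then lo-1
  else if lo % 7 = 5 ∧ hi = lo+2 then lo+1
  else 0

def eN (m a b : ℕ) : ℕ := if a ≤ b then eo m a b else eo m b a

/-- forcing all three edges of a pendant triangle x-y-z (y the tip, y,z of degree two) -/
lemma tri_forced {A : Set (Fin (7*m+5) × Fin (7*m+5))} {x y z : Fin (7*m+5)}
    (hNA : ∀ {a b : Fin (7*m+5)}, (a, b) ∈ A → (b, a) ∉ A)
    (hNy : ∀ c : Fin (7*m+5), ((y, c) ∈ A ∨ (c, y) ∈ A) → c = x ∨ c = z)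
    (hNz : ∀ c : Fin (7*m+5), ((z, c) ∈ A ∨ (c, z) ∈ A) → c = x ∨ c = y)
    (houty : ∃ c, (y, c) ∈ A) (hiny : ∃ d, (d, y) ∈ A)
    (houtz : (∃ c, (z, c) ∈ A ∨ (c, z) ∈ A) → ∃ c, (z, c) ∈ A)
    (hinz : (∃ c, (z, c) ∈ A ∨ (c, z) ∈ A) → ∃ d, (d, z) ∈ A) :
    ((x, y) ∈ A ∨ (y, x) ∈ A) ∧ ((y, z) ∈ A ∨ (z, y) ∈ A) ∧
      ((x, z) ∈ A ∨ (z, x) ∈ A) := by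
  obtain ⟨c, hc⟩ := houty
  obtain ⟨d, hd⟩ := hiny
  rcases hNy c (Or.inl hc) with rfl | rfl
  · -- (y,x) ∈ A
    rcases hNy d (Or.inr hd) with rfl | rfl
    · exact absurd hd (hNA hc)
    · -- (z,y) ∈ A
      obtain ⟨e, he⟩ := hinz ⟨y, Or.inl hd⟩
      rcases hNz e (Or.inr he) with rfl | rfl
      · exact ⟨Or.inr hc, Or.inr hd, Or.inl he⟩
      · exact absurd he (hNA hd)
  · -- (y,z) ∈ A
    rcases hNy d (Or.inr hd) with rfl | rfl
    · -- (x,y) ∈ A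
      obtain ⟨e, he⟩ := houtz ⟨y, Or.inr hc⟩
      rcases hNz e (Or.inl he) with rfl | rfl
      · exact ⟨Or.inl hd, Or.inl hc, Or.inr he⟩
      · exact absurd he (hNA hc)
    · exact absurd hd (hNA hc)

end Lower

section ENLemmas

variable {m j : ℕ}

lemma eN_comm (m a b : ℕ) : eN m a b = eN m b a := by
  unfold eN
  rcases Nat.lt_trichotomy a b with h | rfl | h
  · rw [if_pos (by omega), if_neg (by omega)]
  · rfl
  · rw [if_neg (by omega), if_pos (by omega)]

lemma eN1 (hj : j < m) : eN m (7*j) (7*j+3) = 7*j := by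
  rw [eN, if_pos (by omega), eo]
  rw [if_neg (by omega), if_neg (by omega), if_neg (by omega), if_neg (by omega), if_neg (by omega), if_neg (by omega), if_pos (by omega)]
lemma eN2 (hj : j < m) : eN m (7*j+3) (7*j+5) = 7*j+1 := by
  rw [eN, if_pos (by omega), eo]
  rw [if_neg (by omega), if_neg (by omega), if_neg (by omega), if_neg (by omega), if_neg (by omega), if_neg (by omega), if_neg (by omega), if_pos (by omega)]
  omega
lemma eN3 (hj : j < m) : eN m (7*j+4) (7*j+5) = 7*j+2 := by
  rw [eN, if_pos (by omega), eo]
  rw [if_neg (by omega), if_neg (by omega), if_neg (by omega), if_neg (by omega), if_neg (by omega), if_neg (by omega), if_neg (by omega), if_neg (by omega), if_pos (by omega)]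
  omega
lemma eN4 (hj : j < m) : eN m (7*j) (7*j+4) = 7*j+3 := by
  rw [eN, if_pos (by omega), eo]
  rw [if_neg (by omega), if_neg (by omega), if_neg (by omega), if_neg (by omega), if_neg (by omega), if_neg (by omega), if_neg (by omega), if_neg (by omega), if_neg (by omega), if_pos (by omega)]
lemma eN5 (hj : j < m) : eN m (7*j+5) (7*j+6) = 7*j+4 := by
  rw [eN, if_pos (by omega), eo]
  rw [if_neg (by omega), if_neg (by omega), if_neg (by omega), if_neg (by omega), if_neg (by omega), if_neg (by omega), if_neg (by omega), if_neg (by omega), if_neg (by omega), if_neg (by omega), if_pos (by omega)]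
  omega
lemma eN6 (hj : j < m) : eN m (7*j+6) (7*j+7) = 7*j+5 := by
  rw [eN, if_pos (by omega), eo]
  rw [if_neg (by omega), if_neg (by omega), if_neg (by omega), if_neg (by omega), if_neg (by omega), if_neg (by omega), if_neg (by omega), if_neg (by omega), if_neg (by omega), if_neg (by omega), if_neg (by omega), if_pos (by omega)]
  omega
lemma eN7 (hj : j < m) : eN m (7*j+5) (7*j+7) = 7*j+6 := by
  rw [eN, if_pos (by omega), eo]
  rw [if_neg (by omega), if_neg (by omega), if_neg (by omega), if_neg (by omega), if_neg (by omega), if_neg (by omega), if_neg (by omega), if_neg (by omega), if_neg (by omega), if_neg (by omega), if_neg (by omega), if_neg (by omega), if_pos (by omega)]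
lemma eNt1 (m : ℕ) : eN m (7*m) (7*m+1) = 7*m+3 := by
  rw [eN, if_pos (by omega), eo]
  rw [if_neg (by omega), if_neg (by omega), if_neg (by omega), if_pos (by omega)]
lemma eNt2 (m : ℕ) : eN m (7*m+1) (7*m+2) = 7*m+4 := by
  rw [eN, if_pos (by omega), eo]
  rw [if_neg (by omega), if_neg (by omega), if_neg (by omega), if_neg (by omega), if_pos (by omega)]
lemma eNt3 (m : ℕ) : eN m (7*m) (7*m+2) = 7*m+5 := by
  rw [eN, if_pos (by omega), eo]
  rw [if_neg (by omega), if_neg (by omega), if_neg (by omega), if_neg (by omega), if_neg (by omega), if_pos (by omega)]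
lemma eNe1 (m : ℕ) : eN m 0 (7*m+3) = 7*m := by
  rw [eN, if_pos (by omega), eo]
  rw [if_pos (by omega)]
lemma eNe2 (m : ℕ) : eN m (7*m+3) (7*m+4) = 7*m+1 := by
  rw [eN, if_pos (by omega), eo]
  rw [if_neg (by omega), if_pos (by omega)]
lemma eNe3 (m : ℕ) : eN m 0 (7*m+4) = 7*m+2 := by
  rw [eN, if_pos (by omega), eo]
  rw [if_neg (by omega), if_neg (by omega), if_pos (by omega)]

end ENLemmas

section Lower2

variable {m : ℕ} {A : Set (Fin (7*m+5) × Fin (7*m+5))}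

/-- all seven edges of link j appear in A (in some direction) -/
lemma link_forced
    (hNA : ∀ {a b : Fin (7*m+5)}, (a, b) ∈ A → (b, a) ∉ A)
    (hAdjA : ∀ p ∈ A, (Gr m).Adj p.1 p.2)
    (hout : ∀ x : Fin (7*m+5), (∃ c, (x, c) ∈ A ∨ (c, x) ∈ A) → ∃ c, (x, c) ∈ A)
    (hin : ∀ x : Fin (7*m+5), (∃ c, (x, c) ∈ A ∨ (c, x) ∈ A) → ∃ d, (d, x) ∈ A)
    (hrtg1 : Relation.ReflTransGen (fun a b => (a, b) ∈ A) (sA m) ⟨7*m+1, by omega⟩)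
    (hrtg2 : Relation.ReflTransGen (fun a b => (a, b) ∈ A) ⟨7*m+1, by omega⟩ (sA m))
    {j : ℕ} (hj : j < m) :
    ∀ r : ℕ, r < 7 → ∃ p ∈ A, eN m p.1.val p.2.val = 7*j + r := by
  -- crossing the cut at w_j from left to right
  have hc1 : ((⟨7*j+3, by omega⟩, ⟨7*j+5, by omega⟩) : Fin (7*m+5) × Fin (7*m+5)) ∈ A ∨
      ((⟨7*j+4, by omega⟩, ⟨7*j+5, by omega⟩) : Fin (7*m+5) × Fin (7*m+5)) ∈ A := by
    obtain ⟨a, b, hab, hPa, hPb⟩ := crossing (P := fun k : Fin (7*m+5) =>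
      k.val < 7*j+5 ∨ 7*m+3 ≤ k.val) hrtg1
      (show (7*m+3 < 7*j+5 ∨ 7*m+3 ≤ 7*m+3) from Or.inr le_rfl)
      (show ¬(7*m+1 < 7*j+5 ∨ 7*m+3 ≤ 7*m+1) by omega)
    have hadj := hAdjA _ hab
    have ha := a.isLt
    have hb := b.isLt
    have hv : (a.val = 7*j+3 ∨ a.val = 7*j+4) ∧ b.val = 7*j+5 := by
      have : arc m a.val b.val ∨ arc m b.val a.val := hadj
      unfold arc linkarc extraarc at this
      omega
    rcases hv.1 with h | h
    · left
      rw [show a = (⟨7*j+3, by omega⟩ : Fin (7*m+5)) from Fin.ext h,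
        show b = (⟨7*j+5, by omega⟩ : Fin (7*m+5)) from Fin.ext hv.2] at hab
      exact hab
    · right
      rw [show a = (⟨7*j+4, by omega⟩ : Fin (7*m+5)) from Fin.ext h,
        show b = (⟨7*j+5, by omega⟩ : Fin (7*m+5)) from Fin.ext hv.2] at hab
      exact hab
  -- crossing the cut at w_j from right to left
  have hc2 : ((⟨7*j+5, by omega⟩, ⟨7*j+3, by omega⟩) : Fin (7*m+5) × Fin (7*m+5)) ∈ A ∨
      ((⟨7*j+5, by omega⟩, ⟨7*j+4, by omega⟩) : Fin (7*m+5) × Fin (7*m+5)) ∈ A := by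
    obtain ⟨a, b, hab, hPa, hPb⟩ := crossing (P := fun k : Fin (7*m+5) =>
      ¬(k.val < 7*j+5 ∨ 7*m+3 ≤ k.val)) hrtg2
      (show ¬(7*m+1 < 7*j+5 ∨ 7*m+3 ≤ 7*m+1) by omega)
      (show ¬¬(7*m+3 < 7*j+5 ∨ 7*m+3 ≤ 7*m+3) by omega)
    have hadj := hAdjA _ hab
    have ha := a.isLt
    have hb := b.isLt
    have hv : a.val = 7*j+5 ∧ (b.val = 7*j+3 ∨ b.val = 7*j+4) := by
      have : arc m a.val b.val ∨ arc m b.val a.val := hadj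
      unfold arc linkarc extraarc at this
      omega
    rcases hv.2 with h | h
    · left
      rw [show a = (⟨7*j+5, by omega⟩ : Fin (7*m+5)) from Fin.ext hv.1,
        show b = (⟨7*j+3, by omega⟩ : Fin (7*m+5)) from Fin.ext h] at hab
      exact hab
    · right
      rw [show a = (⟨7*j+5, by omega⟩ : Fin (7*m+5)) from Fin.ext hv.1,
        show b = (⟨7*j+4, by omega⟩ : Fin (7*m+5)) from Fin.ext h] at hab
      exact hab
  -- crossing the cut at v_{j+1} both ways
  have hc3 : ((⟨7*j+5, by omega⟩, ⟨7*j+7, by omega⟩) : Fin (7*m+5) × Fin (7*m+5)) ∈ A ∨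
      ((⟨7*j+6, by omega⟩, ⟨7*j+7, by omega⟩) : Fin (7*m+5) × Fin (7*m+5)) ∈ A := by
    obtain ⟨a, b, hab, hPa, hPb⟩ := crossing (P := fun k : Fin (7*m+5) =>
      k.val < 7*j+7 ∨ 7*m+3 ≤ k.val) hrtg1
      (show (7*m+3 < 7*j+7 ∨ 7*m+3 ≤ 7*m+3) from Or.inr le_rfl)
      (show ¬(7*m+1 < 7*j+7 ∨ 7*m+3 ≤ 7*m+1) by omega)
    have hadj := hAdjA _ hab
    have ha := a.isLt
    have hb := b.isLt
    have hv : (a.val = 7*j+5 ∨ a.val = 7*j+6) ∧ b.val = 7*j+7 := by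
      have : arc m a.val b.val ∨ arc m b.val a.val := hadj
      unfold arc linkarc extraarc at this
      omega
    rcases hv.1 with h | h
    · left
      rw [show a = (⟨7*j+5, by omega⟩ : Fin (7*m+5)) from Fin.ext h,
        show b = (⟨7*j+7, by omega⟩ : Fin (7*m+5)) from Fin.ext hv.2] at hab
      exact hab
    · right
      rw [show a = (⟨7*j+6, by omega⟩ : Fin (7*m+5)) from Fin.ext h,
        show b = (⟨7*j+7, by omega⟩ : Fin (7*m+5)) from Fin.ext hv.2] at hab
      exact hab
  have hc4 : ((⟨7*j+7, by omega⟩, ⟨7*j+5, by omega⟩) : Fin (7*m+5) × Fin (7*m+5)) ∈ A ∨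
      ((⟨7*j+7, by omega⟩, ⟨7*j+6, by omega⟩) : Fin (7*m+5) × Fin (7*m+5)) ∈ A := by
    obtain ⟨a, b, hab, hPa, hPb⟩ := crossing (P := fun k : Fin (7*m+5) =>
      ¬(k.val < 7*j+7 ∨ 7*m+3 ≤ k.val)) hrtg2
      (show ¬(7*m+1 < 7*j+7 ∨ 7*m+3 ≤ 7*m+1) by omega)
      (show ¬¬(7*m+3 < 7*j+7 ∨ 7*m+3 ≤ 7*m+3) by omega)
    have hadj := hAdjA _ hab
    have ha := a.isLt
    have hb := b.isLt
    have hv : a.val = 7*j+7 ∧ (b.val = 7*j+5 ∨ b.val = 7*j+6) := by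
      have : arc m a.val b.val ∨ arc m b.val a.val := hadj
      unfold arc linkarc extraarc at this
      omega
    rcases hv.2 with h | h
    · left
      rw [show a = (⟨7*j+7, by omega⟩ : Fin (7*m+5)) from Fin.ext hv.1,
        show b = (⟨7*j+5, by omega⟩ : Fin (7*m+5)) from Fin.ext h] at hab
      exact hab
    · right
      rw [show a = (⟨7*j+7, by omega⟩ : Fin (7*m+5)) from Fin.ext hv.1,
        show b = (⟨7*j+6, by omega⟩ : Fin (7*m+5)) from Fin.ext h] at hab
      exact hab
  -- neighbours of x_j, y_j, z_j
  have nbrX : ∀ c : Fin (7*m+5),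
      (((⟨7*j+3, by omega⟩ : Fin (7*m+5)), c) ∈ A ∨
        (c, (⟨7*j+3, by omega⟩ : Fin (7*m+5))) ∈ A) →
      c.val = 7*j ∨ c.val = 7*j+5 := by
    intro c hc
    have hcl := c.isLt
    rcases hc with h | h
    · have : arc m (7*j+3) c.val ∨ arc m c.val (7*j+3) := hAdjA _ h
      unfold arc linkarc extraarc at this; omega
    · have : arc m c.val (7*j+3) ∨ arc m (7*j+3) c.val := hAdjA _ h
      unfold arc linkarc extraarc at this; omega
  have nbrY : ∀ c : Fin (7*m+5),
      (((⟨7*j+4, by omega⟩ : Fin (7*m+5)), c) ∈ A ∨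
        (c, (⟨7*j+4, by omega⟩ : Fin (7*m+5))) ∈ A) →
      c.val = 7*j ∨ c.val = 7*j+5 := by
    intro c hc
    have hcl := c.isLt
    rcases hc with h | h
    · have : arc m (7*j+4) c.val ∨ arc m c.val (7*j+4) := hAdjA _ h
      unfold arc linkarc extraarc at this; omega
    · have : arc m c.val (7*j+4) ∨ arc m (7*j+4) c.val := hAdjA _ h
      unfold arc linkarc extraarc at this; omega
  have nbrZ : ∀ c : Fin (7*m+5),
      (((⟨7*j+6, by omega⟩ : Fin (7*m+5)), c) ∈ A ∨
        (c, (⟨7*j+6, by omega⟩ : Fin (7*m+5))) ∈ A) →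
      c.val = 7*j+5 ∨ c.val = 7*j+7 := by
    intro c hc
    have hcl := c.isLt
    rcases hc with h | h
    · have : arc m (7*j+6) c.val ∨ arc m c.val (7*j+6) := hAdjA _ h
      unfold arc linkarc extraarc at this; omega
    · have : arc m c.val (7*j+6) ∨ arc m (7*j+6) c.val := hAdjA _ h
      unfold arc linkarc extraarc at this; omega
  -- the four C4 edges
  have hC4 : (∃ p ∈ A, eN m p.1.val p.2.val = 7*j) ∧
      (∃ p ∈ A, eN m p.1.val p.2.val = 7*j+1) ∧
      (∃ p ∈ A, eN m p.1.val p.2.val = 7*j+2) ∧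
      (∃ p ∈ A, eN m p.1.val p.2.val = 7*j+3) := by
    rcases hc1 with hxw | hyw
    · rcases hc2 with hwx | hwy
      · exact absurd hwx (hNA hxw)
      · obtain ⟨d, hd⟩ := hin _ ⟨_, Or.inl hxw⟩
        have hdv : d.val = 7*j := by
          rcases nbrX d (Or.inr hd) with h | h
          · exact h
          · exact absurd
              (by rwa [show d = (⟨7*j+5, by omega⟩ : Fin (7*m+5)) from Fin.ext h] at hd)
              (hNA hxw)
        obtain ⟨e, he⟩ := hout _ ⟨_, Or.inr hwy⟩
        have hev : e.val = 7*j := by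
          rcases nbrY e (Or.inl he) with h | h
          · exact h
          · exact absurd hwy
              (hNA (by rwa [show e = (⟨7*j+5, by omega⟩ : Fin (7*m+5)) from Fin.ext h] at he))
        refine ⟨⟨_, hd, ?_⟩, ⟨_, hxw, ?_⟩, ⟨_, hwy, ?_⟩, ⟨_, he, ?_⟩⟩
        · show eN m d.val (7*j+3) = 7*j
          rw [hdv]; exact eN1 hj
        · show eN m (7*j+3) (7*j+5) = 7*j+1
          exact eN2 hj
        · show eN m (7*j+5) (7*j+4) = 7*j+2
          rw [eN_comm]; exact eN3 hj
        · show eN m (7*j+4) e.val = 7*j+3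
          rw [hev, eN_comm]; exact eN4 hj
    · rcases hc2 with hwx | hwy
      · obtain ⟨e, he⟩ := hout _ ⟨_, Or.inr hwx⟩
        have hev : e.val = 7*j := by
          rcases nbrX e (Or.inl he) with h | h
          · exact h
          · exact absurd hwx
              (hNA (by rwa [show e = (⟨7*j+5, by omega⟩ : Fin (7*m+5)) from Fin.ext h] at he))
        obtain ⟨d, hd⟩ := hin _ ⟨_, Or.inl hyw⟩
        have hdv : d.val = 7*j := by
          rcases nbrY d (Or.inr hd) with h | h
          · exact h
          · exact absurd
              (by rwa [show d = (⟨7*j+5, by omega⟩ : Fin (7*m+5)) from Fin.ext h] at hd)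
              (hNA hyw)
        refine ⟨⟨_, he, ?_⟩, ⟨_, hwx, ?_⟩, ⟨_, hyw, ?_⟩, ⟨_, hd, ?_⟩⟩
        · show eN m (7*j+3) e.val = 7*j
          rw [hev, eN_comm]; exact eN1 hj
        · show eN m (7*j+5) (7*j+3) = 7*j+1
          rw [eN_comm]; exact eN2 hj
        · show eN m (7*j+4) (7*j+5) = 7*j+2
          exact eN3 hj
        · show eN m d.val (7*j+4) = 7*j+3
          rw [hdv]; exact eN4 hj
      · exact absurd hwy (hNA hyw)
  -- the three small-triangle edges
  have hTri : (∃ p ∈ A, eN m p.1.val p.2.val = 7*j+4) ∧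
      (∃ p ∈ A, eN m p.1.val p.2.val = 7*j+5) ∧
      (∃ p ∈ A, eN m p.1.val p.2.val = 7*j+6) := by
    rcases hc3 with hwv | hzv
    · rcases hc4 with hvw | hvz
      · exact absurd hvw (hNA hwv)
      · obtain ⟨e, he⟩ := hout _ ⟨_, Or.inr hvz⟩
        have hev : e.val = 7*j+5 := by
          rcases nbrZ e (Or.inl he) with h | h
          · exact h
          · exact absurd
              (by rwa [show e = (⟨7*j+7, by omega⟩ : Fin (7*m+5)) from Fin.ext h] at he)
              (hNA hvz)
        refine ⟨⟨_, he, ?_⟩, ⟨_, hvz, ?_⟩, ⟨_, hwv, ?_⟩⟩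
        · show eN m (7*j+6) e.val = 7*j+4
          rw [hev, eN_comm]; exact eN5 hj
        · show eN m (7*j+7) (7*j+6) = 7*j+5
          rw [eN_comm]; exact eN6 hj
        · show eN m (7*j+5) (7*j+7) = 7*j+6
          exact eN7 hj
    · rcases hc4 with hvw | hvz
      · obtain ⟨d, hd⟩ := hin _ ⟨_, Or.inl hzv⟩
        have hdv : d.val = 7*j+5 := by
          rcases nbrZ d (Or.inr hd) with h | h
          · exact h
          · exact absurd hzv
              (hNA (by rwa [show d = (⟨7*j+7, by omega⟩ : Fin (7*m+5)) from Fin.ext h] at hd))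
        refine ⟨⟨_, hd, ?_⟩, ⟨_, hzv, ?_⟩, ⟨_, hvw, ?_⟩⟩
        · show eN m d.val (7*j+6) = 7*j+4
          rw [hdv]; exact eN5 hj
        · show eN m (7*j+6) (7*j+7) = 7*j+5
          exact eN6 hj
        · show eN m (7*j+7) (7*j+5) = 7*j+6
          rw [eN_comm]; exact eN7 hj
      · exact absurd hvz (hNA hzv)
  intro r hr
  interval_cases r
  · exact hC4.1
  · exact hC4.2.1
  · exact hC4.2.2.1
  · exact hC4.2.2.2
  · exact hTri.1
  · exact hTri.2.1
  · exact hTri.2.2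

end Lower2

section Main

variable {m : ℕ}

def u1 (m : ℕ) : Fin (7*m+5) := ⟨7*m+1, by omega⟩

lemma forced {R' : Fin (7*m+5) → Fin (7*m+5) → Prop}
    (hor : IsOrientation (Gr m) R')
    {A : Set (Fin (7*m+5) × Fin (7*m+5))}
    (hA : IsStrongSubOn R' (sA m) (u1 m) A) :
    ∀ k : ℕ, k < 7*m+6 → ∃ p ∈ A, eN m p.1.val p.2.val = k := by
  obtain ⟨hsubA, hconn⟩ := hA
  obtain ⟨hadj, -, hasym⟩ := hor
  have hNA : ∀ {a b : Fin (7*m+5)}, (a, b) ∈ A → (b, a) ∉ A :=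
    fun h h' => hasym _ _ (hsubA _ h) (hsubA _ h')
  have hAdjA : ∀ p ∈ A, (Gr m).Adj p.1 p.2 := fun p hp => hadj _ _ (hsubA _ hp)
  set VS := insert (sA m) (insert (u1 m) (Prod.fst '' A ∪ Prod.snd '' A)) with hVS
  have hu0 : sA m ∈ VS := Set.mem_insert _ _
  have hu1 : u1 m ∈ VS := Set.mem_insert_of_mem _ (Set.mem_insert _ _)
  have hmem : ∀ x : Fin (7*m+5), (∃ c, (x, c) ∈ A ∨ (c, x) ∈ A) → x ∈ VS := by
    rintro x ⟨c, h | h⟩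
    · exact Set.mem_insert_of_mem _ (Set.mem_insert_of_mem _ (Or.inl ⟨(x, c), h, rfl⟩))
    · exact Set.mem_insert_of_mem _ (Set.mem_insert_of_mem _ (Or.inr ⟨(c, x), h, rfl⟩))
  have hne : sA m ≠ u1 m := by
    intro h
    have : (7*m+3 : ℕ) = 7*m+1 := congrArg Fin.val h
    omega
  have hout : ∀ x ∈ VS, ∃ c, (x, c) ∈ A := by
    intro x hx
    by_cases h : x = u1 m
    · subst h
      exact first_arc (hconn _ hx _ hu0) (Ne.symm hne)
    · exact first_arc (hconn _ hx _ hu1) h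
  have hin : ∀ x ∈ VS, ∃ d, (d, x) ∈ A := by
    intro x hx
    by_cases h : x = sA m
    · subst h
      exact last_arc (hconn _ hu1 _ hx) (Ne.symm hne)
    · exact last_arc (hconn _ hu0 _ hx) (fun e => h e.symm)
  have hrtg1 := hconn _ hu0 _ hu1
  have hrtg2 := hconn _ hu1 _ hu0
  -- the triangle at unit m
  have nbrU1 : ∀ c : Fin (7*m+5), ((u1 m, c) ∈ A ∨ (c, u1 m) ∈ A) →
      c = (⟨7*m, by omega⟩ : Fin (7*m+5)) ∨ c = (⟨7*m+2, by omega⟩ : Fin (7*m+5)) := by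
    intro c hc
    have hcl := c.isLt
    have hval : c.val = 7*m ∨ c.val = 7*m+2 := by
      rcases hc with h | h
      · have : arc m (7*m+1) c.val ∨ arc m c.val (7*m+1) := hAdjA _ h
        unfold arc linkarc extraarc at this; omega
      · have : arc m c.val (7*m+1) ∨ arc m (7*m+1) c.val := hAdjA _ h
        unfold arc linkarc extraarc at this; omega
    rcases hval with h | h
    · exact Or.inl (Fin.ext h)
    · exact Or.inr (Fin.ext h)
  have nbrT2 : ∀ c : Fin (7*m+5),
      (((⟨7*m+2, by omega⟩ : Fin (7*m+5)), c) ∈ A ∨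
        (c, (⟨7*m+2, by omega⟩ : Fin (7*m+5))) ∈ A) →
      c = (⟨7*m, by omega⟩ : Fin (7*m+5)) ∨ c = u1 m := by
    intro c hc
    have hcl := c.isLt
    have hval : c.val = 7*m ∨ c.val = 7*m+1 := by
      rcases hc with h | h
      · have : arc m (7*m+2) c.val ∨ arc m c.val (7*m+2) := hAdjA _ h
        unfold arc linkarc extraarc at this; omega
      · have : arc m c.val (7*m+2) ∨ arc m (7*m+2) c.val := hAdjA _ h
        unfold arc linkarc extraarc at this; omega
    rcases hval with h | h
    · exact Or.inl (Fin.ext h)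
    · exact Or.inr (Fin.ext h)
  have htriM := tri_forced (x := (⟨7*m, by omega⟩ : Fin (7*m+5))) (y := u1 m)
    (z := (⟨7*m+2, by omega⟩ : Fin (7*m+5))) hNA nbrU1 nbrT2
    (hout _ hu1) (hin _ hu1)
    (fun hz => hout _ (hmem _ hz)) (fun hz => hin _ (hmem _ hz))
  -- the extra triangle
  have nbrSA : ∀ c : Fin (7*m+5), ((sA m, c) ∈ A ∨ (c, sA m) ∈ A) →
      c = hub0 m ∨ c = sB m := by
    intro c hc
    have hcl := c.isLt
    have hval : c.val = 0 ∨ c.val = 7*m+4 := by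
      rcases hc with h | h
      · have : arc m (7*m+3) c.val ∨ arc m c.val (7*m+3) := hAdjA _ h
        unfold arc linkarc extraarc at this; omega
      · have : arc m c.val (7*m+3) ∨ arc m (7*m+3) c.val := hAdjA _ h
        unfold arc linkarc extraarc at this; omega
    rcases hval with h | h
    · exact Or.inl (Fin.ext h)
    · exact Or.inr (Fin.ext h)
  have nbrSB : ∀ c : Fin (7*m+5), ((sB m, c) ∈ A ∨ (c, sB m) ∈ A) →
      c = hub0 m ∨ c = sA m := by
    intro c hc
    have hcl := c.isLt
    have hval : c.val = 0 ∨ c.val = 7*m+3 := by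
      rcases hc with h | h
      · have : arc m (7*m+4) c.val ∨ arc m c.val (7*m+4) := hAdjA _ h
        unfold arc linkarc extraarc at this; omega
      · have : arc m c.val (7*m+4) ∨ arc m (7*m+4) c.val := hAdjA _ h
        unfold arc linkarc extraarc at this; omega
    rcases hval with h | h
    · exact Or.inl (Fin.ext h)
    · exact Or.inr (Fin.ext h)
  have htriE := tri_forced (x := hub0 m) (y := sA m) (z := sB m) hNA nbrSA nbrSB
    (hout _ hu0) (hin _ hu0)
    (fun hz => hout _ (hmem _ hz)) (fun hz => hin _ (hmem _ hz))
  intro k hk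
  by_cases hkm : k < 7*m
  · have hlink := link_forced hNA hAdjA (fun x hx => hout _ (hmem _ hx))
      (fun x hx => hin _ (hmem _ hx)) hrtg1 hrtg2 (j := k / 7) (by omega)
      (k % 7) (by omega)
    obtain ⟨p, hp, he⟩ := hlink
    exact ⟨p, hp, he.trans (by omega)⟩
  · have hcase : k = 7*m ∨ k = 7*m+1 ∨ k = 7*m+2 ∨ k = 7*m+3 ∨ k = 7*m+4 ∨ k = 7*m+5 := by
      omega
    rcases hcase with rfl | rfl | rfl | rfl | rfl | rfl
    · rcases htriE.1 with h | h
      · exact ⟨_, h, show eN m 0 (7*m+3) = 7*m from eNe1 m⟩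
      · exact ⟨_, h, show eN m (7*m+3) 0 = 7*m from (eN_comm m _ _).trans (eNe1 m)⟩
    · rcases htriE.2.1 with h | h
      · exact ⟨_, h, show eN m (7*m+3) (7*m+4) = 7*m+1 from eNe2 m⟩
      · exact ⟨_, h, show eN m (7*m+4) (7*m+3) = 7*m+1 from (eN_comm m _ _).trans (eNe2 m)⟩
    · rcases htriE.2.2 with h | h
      · exact ⟨_, h, show eN m 0 (7*m+4) = 7*m+2 from eNe3 m⟩
      · exact ⟨_, h, show eN m (7*m+4) 0 = 7*m+2 from (eN_comm m _ _).trans (eNe3 m)⟩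
    · rcases htriM.1 with h | h
      · exact ⟨_, h, show eN m (7*m) (7*m+1) = 7*m+3 from eNt1 m⟩
      · exact ⟨_, h, show eN m (7*m+1) (7*m) = 7*m+3 from (eN_comm m _ _).trans (eNt1 m)⟩
    · rcases htriM.2.1 with h | h
      · exact ⟨_, h, show eN m (7*m+1) (7*m+2) = 7*m+4 from eNt2 m⟩
      · exact ⟨_, h, show eN m (7*m+2) (7*m+1) = 7*m+4 from (eN_comm m _ _).trans (eNt2 m)⟩
    · rcases htriM.2.2 with h | h
      · exact ⟨_, h, show eN m (7*m) (7*m+2) = 7*m+5 from eNt3 m⟩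
      · exact ⟨_, h, show eN m (7*m+2) (7*m) = 7*m+5 from (eN_comm m _ _).trans (eNt3 m)⟩

lemma sdist_lower {R' : Fin (7*m+5) → Fin (7*m+5) → Prop}
    (hor : IsOrientation (Gr m) R') (hstr : IsStrong R') :
    7*m+6 ≤ sdist R' (sA m) (u1 m) := by
  have hrtgAll : ∀ x y : Fin (7*m+5), Relation.ReflTransGen R' x y :=
    fun x y => reflTransGen_iff_dirWalk.mpr (hstr x y)
  apply le_csInf
  · exact ⟨({p : Fin (7*m+5) × Fin (7*m+5) | R' p.1 p.2}).ncard,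
      {p | R' p.1 p.2}, Set.toFinite _, rfl,
      ⟨fun p hp => hp, fun x _ y _ => hrtgAll x y⟩⟩
  · rintro n ⟨A, hfin, rfl, hA⟩
    have hforce := forced hor hA
    have hsub : ↑(Finset.range (7*m+6)) ⊆
        (fun p : Fin (7*m+5) × Fin (7*m+5) => eN m p.1.val p.2.val) '' A := by
      intro k hk
      simp only [Finset.coe_range, Set.mem_Iio] at hk
      obtain ⟨p, hp, he⟩ := hforce k hk
      exact ⟨p, hp, he⟩
    calc 7*m+6 = (↑(Finset.range (7*m+6)) : Set ℕ).ncard := by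
          rw [Set.ncard_coe_finset, Finset.card_range]
      _ ≤ ((fun p : Fin (7*m+5) × Fin (7*m+5) => eN m p.1.val p.2.val) '' A).ncard :=
          Set.ncard_le_ncard hsub (hfin.image _)
      _ ≤ A.ncard := Set.ncard_image_le hfin

lemma sdiamOr_Ror (m : ℕ) : sdiamOr (Ror m) = 7*m+6 := by
  apply le_antisymm
  · apply Finset.sup_le
    rintro ⟨u, v⟩ -
    exact sdist_Ror_le u v
  · exact le_trans (sdist_lower (orientation_Ror m) (isStrong_Ror m))
      (Finset.le_sup (f := fun p : Fin (7*m+5) × Fin (7*m+5) => sdist (Ror m) p.1 p.2)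
        (Finset.mem_univ (sA m, u1 m)))

lemma orientedSDiam_Gr (m : ℕ) : orientedSDiam (Gr m) = 7*m+6 := by
  apply le_antisymm
  · exact Nat.sInf_le ⟨Ror m, orientation_Ror m, isStrong_Ror m, sdiamOr_Ror m⟩
  · apply le_csInf
    · exact ⟨7*m+6, Ror m, orientation_Ror m, isStrong_Ror m, sdiamOr_Ror m⟩
    · rintro d ⟨R', hor, hstr, rfl⟩
      exact le_trans (sdist_lower hor hstr)
        (Finset.le_sup (f := fun p : Fin (7*m+5) × Fin (7*m+5) => sdist R' p.1 p.2)
          (Finset.mem_univ (sA m, u1 m)))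

end Main

end OSDS

/-- For every `γ ≥ 1` there is a connected bridgeless graph with domination
number `γ` whose oriented strong diameter equals `7γ - 1`. -/
theorem oriented_sdiam_bound_sharp (γ : ℕ) (hγ : 1 ≤ γ) :
    ∃ (n : ℕ) (G : SimpleGraph (Fin n)),
      G.Connected ∧ IsBridgeless G ∧ dominationNumber G = γ ∧
      orientedSDiam G = 7 * γ - 1 := by
  obtain ⟨m, rfl⟩ : ∃ m, γ = m + 1 := ⟨γ - 1, by omega⟩
  refine ⟨7*m+5, OSDS.Gr m, OSDS.connected_Gr m, OSDS.bridgeless_Gr m,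
    OSDS.dominationNumber_Gr m, ?_⟩
  rw [OSDS.orientedSDiam_Gr]
  omega
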